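/- Let n ≥ 1 and let a* = (1/√2)(-(d/dx) ∘ x^{-(n-1)} + x^n) and b* = (1/√2)(-x^{-(n-1)} d/dx + x^n). For every l ≥ 1, the Rodrigues-type formula (a*b*)^l e^{-x^{2n}/(2n)} = (1/2^l) e^{x^{2n}/(2n)} ((d/dx) ∘ x^{-(2n-2)} ∘ (d/dx))^l e^{-x^{2n}/n} holds on ℝ \ {0}. -/

import Mathlib

open Real

/-- The raising operator `a*`: `a* f(x) = (1/√2)(-(f(x)/x^{n-1})' + x^n f(x))`. -/
noncomputable def aStar (n : ℕ) (f : ℝ → ℝ) : ℝ → ℝ := fun x =>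
  (1 / Real.sqrt 2) * (-(deriv (fun s => f s / s ^ (n - 1)) x) + x ^ n * f x)

/-- The raising operator `b*`: `b* f(x) = (1/√2)(-f'(x)/x^{n-1} + x^n f(x))`. -/
noncomputable def bStar (n : ℕ) (f : ℝ → ℝ) : ℝ → ℝ := fun x =>
  (1 / Real.sqrt 2) * (-(deriv f x) / x ^ (n - 1) + x ^ n * f x)

/-- The second-order operator `(d/dx) ∘ x^{-(2n-2)} ∘ (d/dx)`. -/
noncomputable def Dop (n : ℕ) (g : ℝ → ℝ) : ℝ → ℝ := fun x =>
  deriv (fun s => deriv g s / s ^ (2 * n - 2)) x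

lemma isOpen_S : IsOpen {x : ℝ | x ≠ 0} := isOpen_compl_singleton

lemma Dop_contDiffOn (n : ℕ) {g : ℝ → ℝ} (hg : ContDiffOn ℝ ⊤ g {x : ℝ | x ≠ 0}) :
    ContDiffOn ℝ ⊤ (Dop n g) {x : ℝ | x ≠ 0} := by
  have h1 : ContDiffOn ℝ ⊤ (deriv g) {x : ℝ | x ≠ 0} :=
    hg.deriv_of_isOpen isOpen_S le_top
  have h2 : ContDiffOn ℝ ⊤ (fun s : ℝ => deriv g s / s ^ (2 * n - 2)) {x : ℝ | x ≠ 0} := by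
    refine h1.div ((contDiff_id.pow _).contDiffOn) ?_
    intro s hs
    exact pow_ne_zero _ hs
  exact h2.deriv_of_isOpen isOpen_S le_top

lemma G_contDiffOn (n : ℕ) (l : ℕ) :
    ContDiffOn ℝ ⊤ ((Dop n)^[l] (fun s => Real.exp (-s ^ (2 * n) / n))) {x : ℝ | x ≠ 0} := by
  induction l with
  | zero =>
      simp only [Function.iterate_zero, id_eq]
      exact (Real.contDiff_exp.comp (((contDiff_id.pow _).neg).div_const _)).contDiffOn
  | succ l ih =>
      rw [Function.iterate_succ_apply']
      exact Dop_contDiffOn n ih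

lemma hasDerivAt_phi (n : ℕ) (hn : 1 ≤ n) (s : ℝ) :
    HasDerivAt (fun t : ℝ => t ^ (2 * n) / (2 * n)) (s ^ (2 * n - 1)) s := by
  have h := (hasDerivAt_pow (2 * n) s).div_const (2 * n : ℝ)
  have hne : (2 * n : ℝ) ≠ 0 := by positivity
  refine h.congr_deriv ?_
  push_cast
  field_simp

/-- Rodrigues-type formula:
`(a*b*)^l e^{-x^{2n}/(2n)} = (1/2^l) e^{x^{2n}/(2n)} ((d/dx) x^{-(2n-2)} (d/dx))^l e^{-x^{2n}/n}`
on `ℝ \ {0}`. -/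
theorem stmt13 (n : ℕ) (hn : 1 ≤ n) (l : ℕ) (hl : 1 ≤ l) (x : ℝ) (hx : x ≠ 0) :
    ((fun f => aStar n (bStar n f))^[l] (fun s => Real.exp (-s ^ (2 * n) / (2 * n)))) x
      = (1 / 2 ^ l) * Real.exp (x ^ (2 * n) / (2 * n)) *
          ((Dop n)^[l] (fun s => Real.exp (-s ^ (2 * n) / n))) x := by
  clear hl
  set g0 : ℝ → ℝ := fun s => Real.exp (-s ^ (2 * n) / n) with hg0
  have hnR : (n : ℝ) ≠ 0 := Nat.cast_ne_zero.2 (by omega)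
  induction l generalizing x with
  | zero =>
      simp only [Function.iterate_zero, id_eq, pow_zero, hg0]
      rw [one_div_one, one_mul, ← Real.exp_add]
      congr 1
      field_simp
      ring
  | succ l IH =>
      set F : ℝ → ℝ := (fun f => aStar n (bStar n f))^[l] (fun s => Real.exp (-s ^ (2 * n) / (2 * n))) with hF
      set G : ℝ → ℝ := (Dop n)^[l] g0 with hG
      set h : ℝ → ℝ := fun s => (1 / 2 ^ l : ℝ) * Real.exp (s ^ (2 * n) / (2 * n)) * G s with hh
      have hGcd := G_contDiffOn n l
      have hGd : ∀ s : ℝ, s ≠ 0 → DifferentiableAt ℝ G s := fun s hs =>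
        ((hGcd.differentiableOn (by simp)).differentiableAt (isOpen_S.mem_nhds hs))
      have hG'cd : ContDiffOn ℝ ⊤ (deriv G) {x : ℝ | x ≠ 0} :=
        hGcd.deriv_of_isOpen isOpen_S le_top
      have hG'd : ∀ s : ℝ, s ≠ 0 → DifferentiableAt ℝ (deriv G) s := fun s hs =>
        ((hG'cd.differentiableOn (by simp)).differentiableAt (isOpen_S.mem_nhds hs))
      have hE : ∀ s : ℝ, HasDerivAt (fun t : ℝ => Real.exp (t ^ (2 * n) / (2 * n)))
          (Real.exp (s ^ (2 * n) / (2 * n)) * s ^ (2 * n - 1)) s := fun s =>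
        (hasDerivAt_phi n hn s).exp
      have hder_h : ∀ s : ℝ, s ≠ 0 → HasDerivAt h
          ((1 / 2 ^ l * (Real.exp (s ^ (2 * n) / (2 * n)) * s ^ (2 * n - 1))) * G s
            + (1 / 2 ^ l * Real.exp (s ^ (2 * n) / (2 * n))) * deriv G s) s := by
        intro s hs
        exact (((hE s).const_mul (1 / 2 ^ l : ℝ)).mul (hGd s hs).hasDerivAt)
      have hFh : ∀ s : ℝ, s ≠ 0 → F s = h s := fun s hs => IH s hs
      have hev : ∀ s : ℝ, s ≠ 0 → F =ᶠ[nhds s] h := fun s hs =>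
        Filter.eventuallyEq_of_mem (isOpen_S.mem_nhds hs) (fun t ht => hFh t ht)
      have hderiv_F : ∀ s : ℝ, s ≠ 0 → deriv F s = deriv h s := fun s hs => (hev s hs).deriv_eq
      have hbh : ∀ s : ℝ, s ≠ 0 → bStar n h s
          = -((1 / Real.sqrt 2) * (1 / 2 ^ l)) * Real.exp (s ^ (2 * n) / (2 * n))
              * deriv G s / s ^ (n - 1) := by
        intro s hs
        unfold bStar
        rw [(hder_h s hs).deriv]
        simp only [hh]
        have e1 : s ^ (2 * n - 1) = s ^ n * s ^ (n - 1) := by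
          rw [← pow_add]; congr 1; omega
        rw [e1]
        generalize (1 / (2:ℝ) ^ l) = c
        have hp : s ^ (n - 1) ≠ 0 := pow_ne_zero _ hs
        field_simp
        ring
      have hbF : ∀ s : ℝ, s ≠ 0 → bStar n F s = bStar n h s := by
        intro s hs
        unfold bStar
        rw [hderiv_F s hs, hFh s hs]
      set K : ℝ → ℝ := fun s => -((1 / Real.sqrt 2) * (1 / 2 ^ l : ℝ))
          * (Real.exp (s ^ (2 * n) / (2 * n)) * (deriv G s / s ^ (2 * n - 2))) with hK
      have hKeq : ∀ s : ℝ, s ≠ 0 → bStar n F s / s ^ (n - 1) = K s := by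
        intro s hs
        rw [hbF s hs, hbh s hs, hK]
        beta_reduce
        have e2 : s ^ (2 * n - 2) = s ^ (n - 1) * s ^ (n - 1) := by
          rw [← pow_add]; congr 1; omega
        rw [e2]
        generalize (1 / (2:ℝ) ^ l) = c
        have hp : s ^ (n - 1) ≠ 0 := pow_ne_zero _ hs
        field_simp
      have hKev : (fun s => bStar n F s / s ^ (n - 1)) =ᶠ[nhds x] K :=
        Filter.eventuallyEq_of_mem (isOpen_S.mem_nhds hx) (fun t ht => hKeq t ht)
      have hw : HasDerivAt (fun s : ℝ => deriv G s / s ^ (2 * n - 2))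
          (deriv (fun s : ℝ => deriv G s / s ^ (2 * n - 2)) x) x := by
        refine DifferentiableAt.hasDerivAt ?_
        exact (hG'd x hx).div (differentiableAt_id.pow _) (pow_ne_zero _ hx)
      have hKd : HasDerivAt K
          (-((1 / Real.sqrt 2) * (1 / 2 ^ l : ℝ)) *
            ((Real.exp (x ^ (2 * n) / (2 * n)) * x ^ (2 * n - 1))
                * (deriv G x / x ^ (2 * n - 2))
              + Real.exp (x ^ (2 * n) / (2 * n))
                * deriv (fun s : ℝ => deriv G s / s ^ (2 * n - 2)) x)) x :=
        ((hE x).mul hw).const_mul _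
      rw [Function.iterate_succ_apply', Function.iterate_succ_apply', ← hF, ← hG]
      show aStar n (bStar n F) x = 1 / 2 ^ (l + 1) * Real.exp (x ^ (2 * n) / (2 * n)) * Dop n G x
      unfold aStar
      rw [hKev.deriv_eq, hKd.deriv, hbF x hx, hbh x hx]
      have hDop : Dop n G x = deriv (fun s : ℝ => deriv G s / s ^ (2 * n - 2)) x := rfl
      rw [hDop]
      have e1 : x ^ (2 * n - 1) = x ^ n * x ^ (n - 1) := by rw [← pow_add]; congr 1; omega
      have e2 : x ^ (2 * n - 2) = x ^ (n - 1) * x ^ (n - 1) := by rw [← pow_add]; congr 1; omega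
      rw [e1, e2, pow_succ]
      have h2 : Real.sqrt 2 * Real.sqrt 2 = 2 := Real.mul_self_sqrt (by norm_num)
      have hs2 : Real.sqrt 2 ≠ 0 := by positivity
      have hp : x ^ (n - 1) ≠ 0 := pow_ne_zero _ hx
      have hc : (2:ℝ) ^ l ≠ 0 := by positivity
      set a := Real.sqrt 2 with ha
      set Ex := Real.exp (x ^ (2 * n) / (2 * n)) with hEx
      set A := deriv G x with hA
      set B := deriv (fun s : ℝ => deriv G s / s ^ (2 * n - 2)) x with hB
      set P := x ^ (n - 1) with hP
      set q := x ^ n with hq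
      set c := (2:ℝ) ^ l with hcc
      field_simp
      ring_nf
      linear_combination (-(Ex * x ^ (n - 1) * B)) * h2
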